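/- Let (A, τ) be a noncommutative probability space, let {A_i ; i ∈ I} be a free family of unital subalgebras, and let a₁, …, a_n ∈ A with each a_j belonging to A_{i_j}. Then τ(a₁⋯a_n) = Σ_π Π_{V ∈ π} R^{(|V|)}(a_{j₁}, …, a_{j_k}), where the sum runs only over those noncrossing partitions π ∈ NC(n) all of whose blocks are monochromatic, i.e. such that j ↦ i_j is constant on every block of π, and (R⁽ⁿ⁾) are the noncrossing cumulant functionals of (A, τ). -/

import Mathlib

open scoped Classical

/-- `π` is a partition of `{1, …, n}` (modelled as `Fin n`): the blocks are nonempty and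
every point belongs to exactly one block. -/
def IsPartition {n : ℕ} (π : Finset (Finset (Fin n))) : Prop :=
  (∀ B ∈ π, B.Nonempty) ∧ ∀ i : Fin n, ∃! B : Finset (Fin n), B ∈ π ∧ i ∈ B

/-- A partition of `{1, …, n}` is noncrossing if there is no quadruple `i < j < k < l`
with `i, k` in one block and `j, l` in a different block. -/
def IsNoncrossing {n : ℕ} (π : Finset (Finset (Fin n))) : Prop :=
  ¬ ∃ i j k l : Fin n, i < j ∧ j < k ∧ k < l ∧
      ∃ B ∈ π, ∃ B' ∈ π, B ≠ B' ∧ i ∈ B ∧ k ∈ B ∧ j ∈ B' ∧ l ∈ B'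

/-- `NC n`: the (finite) set of noncrossing partitions of `{1, …, n}`. -/
noncomputable def NC (n : ℕ) : Finset (Finset (Finset (Fin n))) :=
  Finset.univ.filter fun π => IsPartition π ∧ IsNoncrossing π

/-- The term `Π_{V ∈ π} R^{(|V|)}(a_{j₁}, …, a_{j_k})` associated to a partition `π`,
where each block `V = {j₁ < … < j_k}` is listed in increasing order. -/
noncomputable def cumulantTerm {A : Type*} [Ring A] [Algebra ℂ A]
    (R : ∀ m : ℕ, MultilinearMap ℂ (fun _ : Fin m => A) ℂ)
    {n : ℕ} (π : Finset (Finset (Fin n))) (a : Fin n → A) : ℂ :=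
  ∏ B ∈ π, R B.card fun i => a (B.orderIsoOfFin rfl i).1

/-- The moment–cumulant relation: for every `n ≥ 1` and `a₁, …, a_n ∈ A`,
`τ(a₁ ⋯ a_n) = Σ_{π ∈ NC(n)} Π_{V ∈ π} R^{(|V|)}(a_V)`. -/
def MomentCumulant {A : Type*} [Ring A] [Algebra ℂ A] (τ : A →ₗ[ℂ] ℂ)
    (R : ∀ m : ℕ, MultilinearMap ℂ (fun _ : Fin m => A) ℂ) : Prop :=
  ∀ n : ℕ, 0 < n → ∀ a : Fin n → A,
    τ (List.ofFn a).prod = ∑ π ∈ NC n, cumulantTerm R π a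


/-- A family `{A_i ; i ∈ I}` of unital subalgebras of `A` is *free* with respect to the
linear functional `τ` if whenever `a₁, …, a_k` are centered (`τ (a j) = 0`) and each
`a_j` lies in some `A_{i_j}` with consecutive indices distinct, then `τ (a₁ ⋯ a_k) = 0`. -/
def IsFreeFamily {A : Type*} [Ring A] [Algebra ℂ A] {ι : Type*}
    (τ : A →ₗ[ℂ] ℂ) (Alg : ι → Subalgebra ℂ A) : Prop :=
  ∀ (k : ℕ) (idx : Fin (k + 1) → ι) (a : Fin (k + 1) → A),
    (∀ j, a j ∈ Alg (idx j)) →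
    (∀ j : Fin k, idx j.castSucc ≠ idx j.succ) →
    (∀ j, τ (a j) = 0) →
    τ (List.ofFn a).prod = 0

namespace NCAux

open Finset

section Chunk1
variable {A : Type*} [Ring A] [Algebra ℂ A] {ι : Type*}
lemma Rcast (R : ∀ m : ℕ, MultilinearMap ℂ (fun _ : Fin m => A) ℂ) {p q : ℕ} (h : p = q)
    (v : Fin p → A) : R p v = R q (fun i => v (Fin.cast h.symm i)) := by
  subst h; rfl

lemma blockCum_image {q m : ℕ} (R : ∀ m : ℕ, MultilinearMap ℂ (fun _ : Fin m => A) ℂ)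
    {e : Fin q → Fin m} (he : StrictMono e) (V : Finset (Fin q)) (a : Fin m → A) :
    (R (V.image e).card fun i => a (((V.image e).orderIsoOfFin rfl i) : Fin m)) =
      R V.card fun i => (a ∘ e) ((V.orderIsoOfFin rfl i) : Fin q) := by
  have hc : (V.image e).card = V.card := card_image_of_injective _ he.injective
  rw [Rcast R hc]
  congr 1
  funext i
  have hu : (fun j => e ((V.orderEmbOfFin rfl) (Fin.cast hc j))) =
      (V.image e).orderEmbOfFin rfl := by
    apply orderEmbOfFin_unique
    · intro x; exact mem_image_of_mem _ (orderEmbOfFin_mem _ _ _)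
    · exact he.comp ((V.orderEmbOfFin rfl).strictMono.comp (Fin.cast_strictMono hc))
  have := congrFun hu (Fin.cast hc.symm i)
  simp only [Fin.cast_cast, Fin.cast_eq_self] at this
  simp only [coe_orderIsoOfFin_apply]
  rw [← this]
  simp


end Chunk1

section Chunk2
variable {A : Type*} [Ring A] [Algebra ℂ A]
noncomputable def sortProd {m : ℕ} (U : Finset (Fin m)) (a : Fin m → A) : A :=
  ((U.sort (· ≤ ·)).map a).prod

lemma ofFn_orderIso_prod {m : ℕ} (U : Finset (Fin m)) (a : Fin m → A) :
    (List.ofFn fun i => a ((U.orderIsoOfFin rfl i : Fin m))).prod = sortProd U a := by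
  unfold sortProd
  congr 1
  have hlen : ((U.sort (· ≤ ·)).map a).length = U.card := by simp
  apply List.ext_getElem (by simp [hlen])
  intro i h1 h2
  simp only [List.getElem_ofFn]
  simp only [List.getElem_map]
  simp only [coe_orderIsoOfFin_apply, orderEmbOfFin_apply]
  rfl

lemma mask_prod {γ : Type*} (l : List γ) (φ : γ → Prop) [DecidablePred φ] (g : γ → A) :
    (l.map fun j => if φ j then g j else 1).prod
      = ((l.filter fun j => decide (φ j)).map g).prod := by
  induction l with
  | nil => simp
  | cons x l ih =>
    by_cases h : φ x <;> simp [h, ih]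

lemma sort_filter_mem {α : Type*} [LinearOrder α] (W : Finset α) (q : α → Prop)
    [DecidablePred q] :
    ((W.sort (· ≤ ·)).filter fun x => decide (q x)) = (W.filter q).sort (· ≤ ·) := by
  refine (fun hp h1 h2 => List.Perm.eq_of_pairwise' (r := (· ≤ ·)) h1 h2 hp) ?_ ?_ ?_
  · apply List.perm_of_nodup_nodup_toFinset_eq
    · exact (W.sort_nodup _).filter _
    · exact sort_nodup _ _
    · ext x
      simp [List.mem_filter, Finset.mem_sort, Finset.mem_filter]
  · exact (W.pairwise_sort _).filter _
  · exact pairwise_sort _ _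

lemma sort_union_of_lt {m : ℕ} {V W : Finset (Fin m)}
    (h : ∀ v ∈ V, ∀ w ∈ W, v < w) :
    (V ∪ W).sort (· ≤ ·) = V.sort (· ≤ ·) ++ W.sort (· ≤ ·) := by
  refine (fun hp h1 h2 => List.Perm.eq_of_pairwise' (r := (· ≤ ·)) h1 h2 hp) ?_ ?_ ?_
  · apply List.perm_of_nodup_nodup_toFinset_eq
    · exact sort_nodup _ _
    · apply List.Nodup.append (sort_nodup _ _) (sort_nodup _ _)
      intro x hx hx'
      rw [Finset.mem_sort] at hx hx'
      exact absurd rfl (h x hx x hx').ne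
    · ext x
      simp [List.mem_append, Finset.mem_sort, Finset.mem_union]
  · exact pairwise_sort _ _
  · rw [List.pairwise_append]
    refine ⟨pairwise_sort _ _, pairwise_sort _ _, ?_⟩
    intro x hx y hy
    rw [Finset.mem_sort] at hx hy
    exact (h x hx y hy).le

lemma sortProd_union_of_lt {m : ℕ} {V W : Finset (Fin m)}
    (h : ∀ v ∈ V, ∀ w ∈ W, v < w) (a : Fin m → A) :
    sortProd (V ∪ W) a = sortProd V a * sortProd W a := by
  unfold sortProd
  rw [sort_union_of_lt h, List.map_append, List.prod_append]


end Chunk2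

section Runs

variable {ι : Type*} {m : ℕ} (idx : Fin m → ι)

def bdry (l : ℕ) : Prop := ∃ h : l + 1 < m, idx ⟨l, Nat.lt_of_succ_lt h⟩ ≠ idx ⟨l + 1, h⟩

noncomputable def rN (j : Fin m) : ℕ := ((Finset.range j.1).filter (bdry idx)).card

lemma rN_mono {j j' : Fin m} (h : j ≤ j') : rN idx j ≤ rN idx j' :=
  card_le_card (filter_subset_filter _ (range_subset_range.2 h))

lemma rN_add {j j' : Fin m} (h : j ≤ j') :
    rN idx j' = rN idx j + ((Finset.Ico j.1 j'.1).filter (bdry idx)).card := by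
  unfold rN
  have hsplit : Finset.range j'.1 = Finset.range j.1 ∪ Finset.Ico j.1 j'.1 := by
    rw [range_eq_Ico, range_eq_Ico, Finset.Ico_union_Ico_eq_Ico (Nat.zero_le _) h]
  rw [hsplit, filter_union, card_union_of_disjoint]
  apply disjoint_filter_filter
  rw [range_eq_Ico]
  exact Finset.Ico_disjoint_Ico_consecutive _ _ _

lemma rN_step {j : Fin m} (h : j.1 + 1 < m) :
    rN idx ⟨j.1 + 1, h⟩ = rN idx j + if bdry idx j.1 then 1 else 0 := by
  rw [rN_add idx (j' := ⟨j.1 + 1, h⟩) (by exact Nat.le_succ _)]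
  congr 1
  rw [Nat.Ico_succ_singleton, filter_singleton]
  split <;> simp

lemma idx_const_of_rN_eq {j j' : Fin m} (hle : j ≤ j') (h : rN idx j = rN idx j') :
    ∀ w, j ≤ w → w ≤ j' → idx w = idx j := by
  have h2 := rN_add idx hle
  rw [← h] at h2
  have hc : ((Finset.Ico j.1 j'.1).filter (bdry idx)).card = 0 := by omega
  rw [card_eq_zero] at hc
  have hfil : ∀ l ∈ Finset.Ico j.1 j'.1, ¬ bdry idx l := by
    intro l hl hb
    have : l ∈ ((Finset.Ico j.1 j'.1).filter (bdry idx)) := mem_filter.2 ⟨hl, hb⟩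
    simp [hc] at this
  have key : ∀ d, ∀ w : Fin m, w.1 = j.1 + d → w ≤ j' → idx w = idx j := by
    intro d
    induction d with
    | zero =>
      intro w hw _
      have : w = j := Fin.ext (by omega)
      rw [this]
    | succ d ih =>
      intro w hw hwle
      have hwlej : w.1 ≤ j'.1 := hwle
      have hlt : j.1 + d < m := by omega
      have hwple : (⟨j.1 + d, hlt⟩ : Fin m) ≤ j' := by
        show j.1 + d ≤ j'.1; omega
      have ih' : idx ⟨j.1 + d, hlt⟩ = idx j := ih _ rfl hwple
      have hnb : ¬ bdry idx (j.1 + d) := by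
        apply hfil
        rw [Finset.mem_Ico]
        omega
      have hstep : idx ⟨j.1 + d, hlt⟩ = idx w := by
        by_contra hne
        refine hnb ⟨by omega, ?_⟩
        convert hne using 2
        apply Fin.ext
        show j.1 + d + 1 = ↑w
        omega
      rw [← hstep, ih']
  intro w hjw hwj'
  have hjw' : j.1 ≤ w.1 := hjw
  exact key (w.1 - j.1) w (by omega) hwj'

variable (hm : 0 < m)

def lastF : Fin m := ⟨m - 1, Nat.sub_lt hm one_pos⟩

lemma le_lastF (j : Fin m) : j ≤ lastF hm := by
  show j.1 ≤ m - 1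
  omega

lemma rN_le_last (j : Fin m) : rN idx j ≤ rN idx (lastF hm) := rN_mono idx (le_lastF hm j)

lemma rN_surj (v : ℕ) (hv : v ≤ rN idx (lastF hm)) : ∃ j, rN idx j = v := by
  set Sv := univ.filter (fun j : Fin m => v ≤ rN idx j) with hSv
  have hne : Sv.Nonempty := ⟨lastF hm, by simp [hSv, hv]⟩
  set j₀ := Sv.min' hne with hj₀
  have hmem : j₀ ∈ Sv := Finset.min'_mem _ _
  have hv0 : v ≤ rN idx j₀ := by
    rw [hSv] at hmem; exact (mem_filter.1 hmem).2
  refine ⟨j₀, le_antisymm ?_ hv0⟩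
  by_contra hlt
  push_neg at hlt
  have hne0 : j₀.val ≠ 0 := by
    intro h0
    have hz : rN idx j₀ = 0 := by
      unfold rN
      rw [h0]
      simp
    omega
  obtain ⟨l, hl⟩ := Nat.exists_eq_succ_of_ne_zero hne0
  have hllt : l < m := by omega
  have hstep : rN idx j₀ = rN idx ⟨l, hllt⟩ + if bdry idx l then 1 else 0 := by
    have h2 := rN_step idx (j := ⟨l, hllt⟩) (by show l + 1 < m; omega)
    convert h2 using 2
    apply Fin.ext
    show j₀.val = l + 1
    exact hl
  have hvw : v ≤ rN idx ⟨l, hllt⟩ := by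
    split at hstep <;> omega
  have hle2 : j₀ ≤ ⟨l, hllt⟩ := Finset.min'_le _ _ (by simp [hSv, hvw])
  have : j₀.val ≤ l := hle2
  omega

end Runs

section Runs2
variable {ι : Type*} {m : ℕ} (idx : Fin m → ι) (hm : 0 < m)
noncomputable def pcount : ℕ := rN idx (lastF hm) + 1

noncomputable def rHat (j : Fin m) : Fin (pcount idx hm) :=
  ⟨rN idx j, Nat.lt_succ_of_le (rN_le_last idx hm j)⟩

noncomputable def fib (t : Fin (pcount idx hm)) : Finset (Fin m) :=
  univ.filter (fun j => rHat idx hm j = t)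

lemma mem_fib {t : Fin (pcount idx hm)} {j : Fin m} :
    j ∈ fib idx hm t ↔ rN idx j = t.1 := by
  unfold fib rHat
  simp [Fin.ext_iff]

lemma fib_nonempty (t : Fin (pcount idx hm)) : (fib idx hm t).Nonempty := by
  obtain ⟨j, hj⟩ := rN_surj idx hm t.1 (by
    have := t.2
    unfold pcount at this
    omega)
  exact ⟨j, (mem_fib idx hm).2 hj⟩

lemma fib_convex {t : Fin (pcount idx hm)} {j w j' : Fin m}
    (hj : j ∈ fib idx hm t) (hj' : j' ∈ fib idx hm t) (h1 : j ≤ w) (h2 : w ≤ j') :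
    w ∈ fib idx hm t := by
  rw [mem_fib] at *
  have := rN_mono idx h1
  have := rN_mono idx h2
  omega

lemma idx_eq_of_rN_eq {j k : Fin m} (h : rN idx j = rN idx k) : idx j = idx k := by
  rcases le_total j k with hle | hle
  · exact (idx_const_of_rN_eq idx hle h k hle le_rfl).symm
  · exact idx_const_of_rN_eq idx hle h.symm j hle le_rfl

noncomputable def colF (t : Fin (pcount idx hm)) : ι :=
  idx ((fib idx hm t).min' (fib_nonempty idx hm t))

lemma col_spec (j : Fin m) : idx j = colF idx hm (rHat idx hm j) := by
  apply idx_eq_of_rN_eq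
  have := Finset.min'_mem (fib idx hm (rHat idx hm j)) (fib_nonempty idx hm _)
  rw [mem_fib] at this
  rw [this]
  rfl

lemma col_adj (t : ℕ) (h : t + 1 < pcount idx hm) :
    colF idx hm ⟨t, Nat.lt_of_succ_lt h⟩ ≠ colF idx hm ⟨t + 1, h⟩ := by
  set j' := (fib idx hm ⟨t + 1, h⟩).min' (fib_nonempty idx hm _) with hj'def
  have hj' : rN idx j' = t + 1 := by
    have := Finset.min'_mem (fib idx hm ⟨t + 1, h⟩) (fib_nonempty idx hm _)
    rwa [mem_fib] at this
  have hne0 : j'.val ≠ 0 := by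
    intro h0
    have : rN idx j' = 0 := by
      unfold rN; rw [h0]; simp
    omega
  obtain ⟨l, hl⟩ := Nat.exists_eq_succ_of_ne_zero hne0
  have hllt : l < m := by omega
  have hstep : rN idx j' = rN idx ⟨l, hllt⟩ + if bdry idx l then 1 else 0 := by
    have h2 := rN_step idx (j := ⟨l, hllt⟩) (by show l + 1 < m; omega)
    convert h2 using 2
    apply Fin.ext
    show j'.val = l + 1
    exact hl
  have hlo : rN idx ⟨l, hllt⟩ ≤ t + 1 := by
    have : (⟨l, hllt⟩ : Fin m) ≤ j' := by show l ≤ j'.val; omega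
    have := rN_mono idx this
    omega
  have hne' : rN idx ⟨l, hllt⟩ ≠ t + 1 := by
    intro heq
    have hmem : (⟨l, hllt⟩ : Fin m) ∈ fib idx hm ⟨t + 1, h⟩ := (mem_fib idx hm).2 heq
    have := Finset.min'_le _ _ hmem
    rw [← hj'def] at this
    have : j'.val ≤ l := this
    omega
  have hrl : rN idx ⟨l, hllt⟩ = t := by
    split at hstep <;> omega
  have hbd : bdry idx l := by
    by_contra hnb
    rw [if_neg hnb] at hstep
    omega
  obtain ⟨hlm, hneidx⟩ := hbd
  have h1 : colF idx hm ⟨t, Nat.lt_of_succ_lt h⟩ = idx ⟨l, hllt⟩ := by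
    have := col_spec idx hm ⟨l, hllt⟩
    rw [this]
    congr 1
    apply Fin.ext
    show (t : ℕ) = rN idx ⟨l, hllt⟩
    omega
  have h2 : colF idx hm ⟨t + 1, h⟩ = idx j' := by
    have := col_spec idx hm j'
    rw [this]
    congr 1
    apply Fin.ext
    show (t + 1 : ℕ) = rN idx j'
    omega
  rw [h1, h2]
  intro heq
  apply hneidx
  convert heq using 2
  apply Fin.ext
  show l + 1 = j'.val
  omega

end Runs2

section Partitions

variable {m q : ℕ} {ι : Type*}

def PartOn (U : Finset (Fin m)) (π : Finset (Finset (Fin m))) : Prop :=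
  (∀ B ∈ π, B.Nonempty ∧ B ⊆ U) ∧ ∀ i ∈ U, ∃! B, B ∈ π ∧ i ∈ B

noncomputable def NCP (U : Finset (Fin m)) (φ : Finset (Fin m) → Prop) :
    Finset (Finset (Finset (Fin m))) :=
  Finset.univ.filter fun π => PartOn U π ∧ IsNoncrossing π ∧ ∀ B ∈ π, φ B

lemma mem_NCP {U : Finset (Fin m)} {φ : Finset (Fin m) → Prop} {π : Finset (Finset (Fin m))} :
    π ∈ NCP U φ ↔ PartOn U π ∧ IsNoncrossing π ∧ ∀ B ∈ π, φ B := by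
  unfold NCP; simp

lemma noncrossing_anti {π π' : Finset (Finset (Fin m))} (hsub : π' ⊆ π)
    (h : IsNoncrossing π) : IsNoncrossing π' := by
  intro ⟨i, j, k, l, h1, h2, h3, B, hB, B', hB', hne, hi, hk, hj, hl⟩
  exact h ⟨i, j, k, l, h1, h2, h3, B, hsub hB, B', hsub hB', hne, hi, hk, hj, hl⟩

lemma block_eq_of_mem {U : Finset (Fin m)} {π : Finset (Finset (Fin m))} (hπ : PartOn U π)
    {B B' : Finset (Fin m)} (hB : B ∈ π) (hB' : B' ∈ π) {x : Fin m} (hx : x ∈ B)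
    (hx' : x ∈ B') : B = B' := by
  have hxU : x ∈ U := (hπ.1 B hB).2 hx
  obtain ⟨C, _, hCuniq⟩ := hπ.2 x hxU
  rw [hCuniq B ⟨hB, hx⟩, hCuniq B' ⟨hB', hx'⟩]

lemma NCP_empty (φ : Finset (Fin m) → Prop) : NCP (∅ : Finset (Fin m)) φ = {∅} := by
  ext π
  rw [mem_NCP, mem_singleton]
  constructor
  · rintro ⟨⟨h1, _⟩, _, _⟩
    rw [eq_empty_iff_forall_notMem]
    intro B hB
    obtain ⟨x, hx⟩ := (h1 B hB).1
    exact notMem_empty x ((h1 B hB).2 hx)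
  · rintro rfl
    refine ⟨⟨by simp, by simp⟩, ?_, by simp⟩
    intro ⟨i, j, k, l, _, _, _, B, hB, _⟩
    simp at hB

lemma isPartition_iff {π : Finset (Finset (Fin q))} :
    IsPartition π ↔ PartOn (univ : Finset (Fin q)) π := by
  constructor
  · rintro ⟨h1, h2⟩
    exact ⟨fun B hB => ⟨h1 B hB, subset_univ B⟩, fun i _ => h2 i⟩
  · rintro ⟨h1, h2⟩
    exact ⟨fun B hB => (h1 B hB).1, fun i => h2 i (mem_univ i)⟩

lemma NC_eq_NCP (φ : Finset (Fin q) → Prop)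
    [DecidablePred fun π : Finset (Finset (Fin q)) => ∀ B ∈ π, φ B] :
    (NC q).filter (fun π => ∀ B ∈ π, φ B) = NCP (univ : Finset (Fin q)) φ := by
  ext π
  rw [mem_filter, mem_NCP, ← isPartition_iff]
  unfold NC
  simp only [mem_filter, mem_univ, true_and]
  tauto

section Transport

variable {A : Type*} [Ring A] [Algebra ℂ A]
variable (R : ∀ m : ℕ, MultilinearMap ℂ (fun _ : Fin m => A) ℂ)
variable {e : Fin q → Fin m} {U : Finset (Fin m)}

lemma pull_image (he : Function.Injective e) (b : Finset (Fin q)) :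
    univ.filter (fun i => e i ∈ b.image e) = b := by
  ext i
  simp only [mem_filter, mem_univ, true_and, mem_image]
  constructor
  · rintro ⟨i', hi', hei⟩
    rwa [he hei] at hi'
  · intro h; exact ⟨i, h, rfl⟩

lemma image_pull (hrange : univ.image e = U) {B : Finset (Fin m)} (hBU : B ⊆ U) :
    (univ.filter (fun i => e i ∈ B)).image e = B := by
  ext x
  simp only [mem_image, mem_filter, mem_univ, true_and]
  constructor
  · rintro ⟨i, hi, rfl⟩; exact hi
  · intro hx
    have : x ∈ univ.image e := hrange ▸ hBU hx
    obtain ⟨i, _, rfl⟩ := mem_image.1 this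
    exact ⟨i, hx, rfl⟩

lemma transport (he : StrictMono e) (hrange : univ.image e = U)
    (a : Fin m → A) (φ : Finset (Fin m) → Prop) (ψ : Finset (Fin q) → Prop)
    (hφψ : ∀ b : Finset (Fin q), ψ b ↔ φ (b.image e)) :
    ∑ σ ∈ NCP (univ : Finset (Fin q)) ψ, cumulantTerm R σ (a ∘ e)
      = ∑ π ∈ NCP U φ, cumulantTerm R π a := by
  have hinj : Function.Injective e := he.injective
  apply Finset.sum_nbij' (i := fun σ => σ.image (fun b => b.image e))
    (j := fun π => π.image (fun B => univ.filter (fun i => e i ∈ B)))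
  · -- membership forward
    intro σ hσ
    rw [mem_NCP] at hσ ⊢
    obtain ⟨⟨hne, hcov⟩, hnc, hψ⟩ := hσ
    refine ⟨⟨?_, ?_⟩, ?_, ?_⟩
    · intro B hB
      obtain ⟨b, hb, rfl⟩ := mem_image.1 hB
      refine ⟨(hne b hb).1.image e, ?_⟩
      intro x hx
      obtain ⟨i, _, rfl⟩ := mem_image.1 hx
      rw [← hrange]
      exact mem_image_of_mem e (mem_univ i)
    · intro x hxU
      obtain ⟨i, _, rfl⟩ := mem_image.1 (hrange ▸ hxU : x ∈ univ.image e)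
      obtain ⟨b, ⟨hb, hib⟩, hbuniq⟩ := hcov i (mem_univ i)
      refine ⟨b.image e, ⟨mem_image_of_mem _ hb, mem_image_of_mem _ hib⟩, ?_⟩
      rintro B ⟨hB, hiB⟩
      obtain ⟨b', hb', rfl⟩ := mem_image.1 hB
      have : i ∈ b' := by
        obtain ⟨i', hi', hei⟩ := mem_image.1 hiB
        rwa [hinj hei] at hi'
      rw [hbuniq b' ⟨hb', this⟩]
    · intro ⟨x, y, z, w, h1, h2, h3, B, hB, B', hB', hBne, hx, hz, hy, hw⟩
      obtain ⟨b, hb, rfl⟩ := mem_image.1 hB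
      obtain ⟨b', hb', rfl⟩ := mem_image.1 hB'
      obtain ⟨x0, hx0, rfl⟩ := mem_image.1 hx
      obtain ⟨z0, hz0, rfl⟩ := mem_image.1 hz
      obtain ⟨y0, hy0, rfl⟩ := mem_image.1 hy
      obtain ⟨w0, hw0, rfl⟩ := mem_image.1 hw
      apply hnc
      exact ⟨x0, y0, z0, w0, he.lt_iff_lt.1 h1, he.lt_iff_lt.1 h2, he.lt_iff_lt.1 h3,
        b, hb, b', hb', fun hbe => hBne (by rw [hbe]), hx0, hz0, hy0, hw0⟩
    · intro B hB
      obtain ⟨b, hb, rfl⟩ := mem_image.1 hB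
      exact (hφψ b).1 (hψ b hb)
  · -- membership backward
    intro π hπ
    rw [mem_NCP] at hπ ⊢
    obtain ⟨⟨hne, hcov⟩, hnc, hφ⟩ := hπ
    have hpullinj : ∀ B ∈ π, ∀ B' ∈ π,
        univ.filter (fun i => e i ∈ B) = univ.filter (fun i => e i ∈ B') → B = B' := by
      intro B hB B' hB' hpe
      have h1 := image_pull hrange (hne B hB).2
      have h2 := image_pull hrange (hne B' hB').2
      rw [← h1, ← h2, hpe]
    refine ⟨⟨?_, ?_⟩, ?_, ?_⟩
    · intro b hb
      obtain ⟨B, hB, rfl⟩ := mem_image.1 hb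
      refine ⟨?_, subset_univ _⟩
      obtain ⟨x, hx⟩ := (hne B hB).1
      have : x ∈ univ.image e := hrange ▸ ((hne B hB).2 hx)
      obtain ⟨i, _, rfl⟩ := mem_image.1 this
      exact ⟨i, by simp [hx]⟩
    · intro i _
      have hiU : e i ∈ U := by rw [← hrange]; exact mem_image_of_mem e (mem_univ i)
      obtain ⟨B, ⟨hB, hiB⟩, hBuniq⟩ := hcov (e i) hiU
      refine ⟨univ.filter (fun i' => e i' ∈ B), ⟨mem_image_of_mem _ hB, by simp [hiB]⟩, ?_⟩
      rintro b ⟨hb, hib⟩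
      obtain ⟨B', hB', rfl⟩ := mem_image.1 hb
      have : e i ∈ B' := (mem_filter.1 hib).2
      rw [hBuniq B' ⟨hB', this⟩]
    · intro ⟨x, y, z, w, h1, h2, h3, b, hb, b', hb', hbne, hx, hz, hy, hw⟩
      obtain ⟨B, hB, rfl⟩ := mem_image.1 hb
      obtain ⟨B', hB', rfl⟩ := mem_image.1 hb'
      apply hnc
      refine ⟨e x, e y, e z, e w, he h1, he h2, he h3, B, hB, B', hB', ?_,
        (mem_filter.1 hx).2, (mem_filter.1 hz).2, (mem_filter.1 hy).2, (mem_filter.1 hw).2⟩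
      intro hBB'
      exact hbne (by rw [hBB'])
    · intro b hb
      obtain ⟨B, hB, rfl⟩ := mem_image.1 hb
      rw [hφψ, image_pull hrange (hne B hB).2]
      exact hφ B hB
  · -- left inverse
    intro σ hσ
    rw [Finset.image_image]
    have : ∀ b ∈ σ, (fun B => univ.filter (fun i => e i ∈ B)) ((fun b => b.image e) b) = b := by
      intro b _
      exact pull_image hinj b
    exact (Finset.image_congr (g := id) (fun b hb => this b (Finset.mem_coe.1 hb))).trans
      Finset.image_id
  · -- right inverse
    intro π hπ
    rw [mem_NCP] at hπ
    rw [Finset.image_image]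
    have : ∀ B ∈ π, ((fun B => univ.filter (fun i => e i ∈ B)) B).image e = B := by
      intro B hB
      exact image_pull hrange (hπ.1.1 B hB).2
    exact (Finset.image_congr (g := id) (fun B hB => this B (Finset.mem_coe.1 hB))).trans
      Finset.image_id
  · -- terms match
    intro σ hσ
    rw [mem_NCP] at hσ
    unfold cumulantTerm
    rw [Finset.prod_image ?hinj]
    case hinj =>
      intro b hb b' hb' heq
      have h1 := pull_image hinj b
      have h2 := pull_image hinj b'
      rw [← h1, ← h2, show b.image e = b'.image e from heq]
    apply Finset.prod_congr rfl
    intro b hb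
    exact (blockCum_image R he b a).symm

end Transport
end Partitions

section Chunk6
variable {m : ℕ} {ι : Type*}
lemma split_prod {A : Type*} [Ring A] [Algebra ℂ A]
    (R : ∀ m : ℕ, MultilinearMap ℂ (fun _ : Fin m => A) ℂ) (a : Fin m → A)
    {V W : Finset (Fin m)} (hdisj : Disjoint V W)
    (φ ψ : Finset (Fin m) → Prop)
    (hsep : ∀ B B', B ⊆ V → B' ⊆ W → B.Nonempty → B'.Nonempty → φ B → ψ B' →
      ∀ i j k l : Fin m, i < j → j < k → k < l →
        ¬(i ∈ B ∧ k ∈ B ∧ j ∈ B' ∧ l ∈ B') ∧ ¬(i ∈ B' ∧ k ∈ B' ∧ j ∈ B ∧ l ∈ B)) :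
    (∑ σ ∈ NCP V φ, cumulantTerm R σ a) * (∑ ρ ∈ NCP W ψ, cumulantTerm R ρ a)
      = ∑ π ∈ NCP (V ∪ W) (fun B => (B ⊆ V ∧ φ B) ∨ (B ⊆ W ∧ ψ B)), cumulantTerm R π a := by
  rw [Finset.sum_mul_sum, ← Finset.sum_product']
  apply Finset.sum_nbij' (i := fun p => p.1 ∪ p.2)
    (j := fun π => (π.filter (fun B => B ⊆ V), π.filter (fun B => B ⊆ W)))
  · -- forward membership
    rintro ⟨σ, ρ⟩ hp
    rw [Finset.mem_product] at hp
    obtain ⟨hσ, hρ⟩ := hp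
    rw [mem_NCP] at hσ hρ ⊢
    obtain ⟨⟨hσne, hσcov⟩, hσnc, hσφ⟩ := hσ
    obtain ⟨⟨hρne, hρcov⟩, hρnc, hρψ⟩ := hρ
    have hblock : ∀ B ∈ σ ∪ ρ, (B ∈ σ ∧ B.Nonempty ∧ B ⊆ V) ∨ (B ∈ ρ ∧ B.Nonempty ∧ B ⊆ W) := by
      intro B hB
      rcases Finset.mem_union.1 hB with h | h
      · exact Or.inl ⟨h, hσne B h⟩
      · exact Or.inr ⟨h, hρne B h⟩
    refine ⟨⟨?_, ?_⟩, ?_, ?_⟩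
    · intro B hB
      rcases hblock B hB with ⟨_, h1, h2⟩ | ⟨_, h1, h2⟩
      · exact ⟨h1, h2.trans subset_union_left⟩
      · exact ⟨h1, h2.trans subset_union_right⟩
    · intro i hi
      rcases Finset.mem_union.1 hi with hiV | hiW
      · obtain ⟨B, ⟨hB, hiB⟩, huniq⟩ := hσcov i hiV
        refine ⟨B, ⟨Finset.mem_union_left _ hB, hiB⟩, ?_⟩
        rintro B' ⟨hB', hiB'⟩
        rcases hblock B' hB' with ⟨h1, _, _⟩ | ⟨_, _, h2⟩
        · exact huniq B' ⟨h1, hiB'⟩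
        · exact absurd (hdisj.forall_ne_finset hiV (h2 hiB')) (fun h => h rfl)
      · obtain ⟨B, ⟨hB, hiB⟩, huniq⟩ := hρcov i hiW
        refine ⟨B, ⟨Finset.mem_union_right _ hB, hiB⟩, ?_⟩
        rintro B' ⟨hB', hiB'⟩
        rcases hblock B' hB' with ⟨_, _, h2⟩ | ⟨h1, _, _⟩
        · exact absurd (hdisj.forall_ne_finset (h2 hiB') hiW) (fun h => h rfl)
        · exact huniq B' ⟨h1, hiB'⟩
    · rintro ⟨i, j, k, l, h1, h2, h3, B, hB, B', hB', hBne, hi, hk, hj, hl⟩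
      rcases hblock B hB with ⟨hBσ, hBne', hBV⟩ | ⟨hBρ, hBne', hBW⟩ <;>
        rcases hblock B' hB' with ⟨hB'σ, hB'ne', hB'V⟩ | ⟨hB'ρ, hB'ne', hB'W⟩
      · exact hσnc ⟨i, j, k, l, h1, h2, h3, B, hBσ, B', hB'σ, hBne, hi, hk, hj, hl⟩
      · exact (hsep B B' hBV hB'W hBne' hB'ne' (hσφ B hBσ) (hρψ B' hB'ρ) i j k l h1 h2 h3).1
          ⟨hi, hk, hj, hl⟩
      · exact (hsep B' B hB'V hBW hB'ne' hBne' (hσφ B' hB'σ) (hρψ B hBρ) i j k l h1 h2 h3).2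
          ⟨hi, hk, hj, hl⟩
      · exact hρnc ⟨i, j, k, l, h1, h2, h3, B, hBρ, B', hB'ρ, hBne, hi, hk, hj, hl⟩
    · intro B hB
      rcases hblock B hB with ⟨h1, _, h2⟩ | ⟨h1, _, h2⟩
      · exact Or.inl ⟨h2, hσφ B h1⟩
      · exact Or.inr ⟨h2, hρψ B h1⟩
  · -- backward membership
    intro π hπ
    rw [mem_NCP] at hπ
    obtain ⟨⟨hne, hcov⟩, hnc, hχ⟩ := hπ
    have hsplit : ∀ B ∈ π, (B ⊆ V ∧ φ B ∧ ¬ B ⊆ W) ∨ (B ⊆ W ∧ ψ B ∧ ¬ B ⊆ V) := by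
      intro B hB
      obtain ⟨x, hx⟩ := (hne B hB).1
      rcases hχ B hB with ⟨h1, h2⟩ | ⟨h1, h2⟩
      · refine Or.inl ⟨h1, h2, fun hc => ?_⟩
        exact absurd (hdisj.forall_ne_finset (h1 hx) (hc hx)) (fun h => h rfl)
      · refine Or.inr ⟨h1, h2, fun hc => ?_⟩
        exact absurd (hdisj.forall_ne_finset (hc hx) (h1 hx)) (fun h => h rfl)
    rw [Finset.mem_product]
    constructor <;> rw [mem_NCP]
    · refine ⟨⟨?_, ?_⟩, noncrossing_anti (filter_subset _ _) hnc, ?_⟩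
      · intro B hB
        rw [mem_filter] at hB
        exact ⟨(hne B hB.1).1, hB.2⟩
      · intro i hiV
        obtain ⟨B, ⟨hB, hiB⟩, huniq⟩ := hcov i (Finset.mem_union_left _ hiV)
        have hBV : B ⊆ V := by
          rcases hsplit B hB with ⟨h1, _, _⟩ | ⟨h1, _, _⟩
          · exact h1
          · exact absurd (hdisj.forall_ne_finset hiV (h1 hiB)) (fun h => h rfl)
        refine ⟨B, ⟨mem_filter.2 ⟨hB, hBV⟩, hiB⟩, ?_⟩
        rintro B' ⟨hB', hiB'⟩
        exact huniq B' ⟨(mem_filter.1 hB').1, hiB'⟩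
      · intro B hB
        rw [mem_filter] at hB
        rcases hsplit B hB.1 with ⟨_, h2, _⟩ | ⟨_, _, h3⟩
        · exact h2
        · exact absurd hB.2 h3
    · refine ⟨⟨?_, ?_⟩, noncrossing_anti (filter_subset _ _) hnc, ?_⟩
      · intro B hB
        rw [mem_filter] at hB
        exact ⟨(hne B hB.1).1, hB.2⟩
      · intro i hiW
        obtain ⟨B, ⟨hB, hiB⟩, huniq⟩ := hcov i (Finset.mem_union_right _ hiW)
        have hBW : B ⊆ W := by
          rcases hsplit B hB with ⟨h1, _, _⟩ | ⟨h1, _, _⟩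
          · exact absurd (hdisj.forall_ne_finset (h1 hiB) hiW) (fun h => h rfl)
          · exact h1
        refine ⟨B, ⟨mem_filter.2 ⟨hB, hBW⟩, hiB⟩, ?_⟩
        rintro B' ⟨hB', hiB'⟩
        exact huniq B' ⟨(mem_filter.1 hB').1, hiB'⟩
      · intro B hB
        rw [mem_filter] at hB
        rcases hsplit B hB.1 with ⟨_, _, h3⟩ | ⟨_, h2, _⟩
        · exact absurd hB.2 h3
        · exact h2
  · -- left inverse
    rintro ⟨σ, ρ⟩ hp
    rw [Finset.mem_product] at hp
    obtain ⟨hσ, hρ⟩ := hp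
    rw [mem_NCP] at hσ hρ
    have hd : ∀ B, B ∈ σ → B ∈ ρ → False := by
      intro B h1 h2
      obtain ⟨x, hx⟩ := (hσ.1.1 B h1).1
      exact absurd (hdisj.forall_ne_finset ((hσ.1.1 B h1).2 hx) ((hρ.1.1 B h2).2 hx))
        (fun h => h rfl)
    have e1 : (σ ∪ ρ).filter (fun B => B ⊆ V) = σ := by
      ext B
      rw [mem_filter, Finset.mem_union]
      constructor
      · rintro ⟨hB | hB, hBV⟩
        · exact hB
        · obtain ⟨x, hx⟩ := (hρ.1.1 B hB).1
          exact absurd (hdisj.forall_ne_finset (hBV hx) ((hρ.1.1 B hB).2 hx)) (fun h => h rfl)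
      · intro hB
        exact ⟨Or.inl hB, (hσ.1.1 B hB).2⟩
    have e2 : (σ ∪ ρ).filter (fun B => B ⊆ W) = ρ := by
      ext B
      rw [mem_filter, Finset.mem_union]
      constructor
      · rintro ⟨hB | hB, hBW⟩
        · obtain ⟨x, hx⟩ := (hσ.1.1 B hB).1
          exact absurd (hdisj.forall_ne_finset ((hσ.1.1 B hB).2 hx) (hBW hx)) (fun h => h rfl)
        · exact hB
      · intro hB
        exact ⟨Or.inr hB, (hρ.1.1 B hB).2⟩
    exact Prod.ext e1 e2
  · -- right inverse
    intro π hπ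
    rw [mem_NCP] at hπ
    obtain ⟨⟨hne, hcov⟩, hnc, hχ⟩ := hπ
    ext B
    rw [Finset.mem_union, mem_filter, mem_filter]
    constructor
    · rintro (⟨h, _⟩ | ⟨h, _⟩) <;> exact h
    · intro hB
      rcases hχ B hB with ⟨h1, _⟩ | ⟨h1, _⟩
      · exact Or.inl ⟨hB, h1⟩
      · exact Or.inr ⟨hB, h1⟩
  · -- terms
    rintro ⟨σ, ρ⟩ hp
    rw [Finset.mem_product] at hp
    obtain ⟨hσ, hρ⟩ := hp
    rw [mem_NCP] at hσ hρ
    unfold cumulantTerm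
    rw [← Finset.prod_union]
    rw [Finset.disjoint_left]
    intro B h1 h2
    obtain ⟨x, hx⟩ := (hσ.1.1 B h1).1
    exact absurd (hdisj.forall_ne_finset ((hσ.1.1 B h1).2 hx) ((hρ.1.1 B h2).2 hx))
      (fun h => h rfl)


end Chunk6

section Chunk7
variable {m : ℕ} {ι : Type*}
lemma rN_eq_of_idx_const (idx : Fin m → ι) {u v : Fin m} (hle : u ≤ v)
    (h : ∀ w, u ≤ w → w ≤ v → idx w = idx u) : rN idx u = rN idx v := by
  rw [rN_add idx hle]
  have : ((Finset.Ico u.1 v.1).filter (bdry idx)).card = 0 := by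
    rw [card_eq_zero, eq_empty_iff_forall_notMem]
    intro l hl
    rw [mem_filter, Finset.mem_Ico] at hl
    obtain ⟨⟨hl1, hl2⟩, hlm, hne⟩ := hl
    have hv : v.1 < m := v.2
    apply hne
    have e1 : idx ⟨l, Nat.lt_of_succ_lt hlm⟩ = idx u :=
      h _ (by show u.1 ≤ l; omega) (by show l ≤ v.1; omega)
    have e2 : idx ⟨l + 1, hlm⟩ = idx u :=
      h _ (by show u.1 ≤ l + 1; omega) (by show l + 1 ≤ v.1; omega)
    rw [e1, e2]
  omega

noncomputable def spanF (B : Finset (Fin m)) : ℕ :=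
  B.sup (fun x => x.val) + B.sup (fun x => m - x.val)

lemma spanF_eq {B : Finset (Fin m)} (h : B.Nonempty) :
    spanF B = (B.max' h).val + (m - (B.min' h).val) := by
  unfold spanF
  congr 1
  · apply le_antisymm
    · exact Finset.sup_le fun x hx => B.le_max' x hx
    · exact Finset.le_sup (f := fun x : Fin m => x.val) (B.max'_mem h)
  · apply le_antisymm
    · exact Finset.sup_le fun x hx => Nat.sub_le_sub_left (B.min'_le x hx) m
    · exact Finset.le_sup (f := fun x : Fin m => m - x.val) (B.min'_mem h)

lemma exists_untouched (idx : Fin m → ι) (hm : 0 < m) {π : Finset (Finset (Fin m))}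
    (hpart : PartOn (univ : Finset (Fin m)) π) (hnc : IsNoncrossing π)
    (hmono : ∀ B ∈ π, ∀ j ∈ B, ∀ k ∈ B, idx j = idx k) :
    ∃ x : Fin m, ∀ D ∈ π, (∃ u ∈ D, ∃ v ∈ D, rN idx u ≠ rN idx v) →
      ∀ w ∈ D, rN idx w ≠ rN idx x := by
  by_cases hMR : ∀ B ∈ π, ¬(∃ u ∈ B, ∃ v ∈ B, rN idx u ≠ rN idx v)
  case pos =>
    exact ⟨⟨0, hm⟩, fun D hD hmr => absurd hmr (hMR D hD)⟩
  case neg =>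
  push_neg at hMR
  obtain ⟨B₁, hB₁π, hB₁mr⟩ := hMR
  set MR := π.filter (fun B => ∃ u ∈ B, ∃ v ∈ B, rN idx u ≠ rN idx v) with hMRdef
  have hMRne : MR.Nonempty := ⟨B₁, mem_filter.2 ⟨hB₁π, hB₁mr⟩⟩
  obtain ⟨B₀, hB₀MR, hB₀min⟩ := Finset.exists_min_image MR spanF hMRne
  rw [hMRdef, mem_filter] at hB₀MR
  obtain ⟨hB₀π, hB₀mr⟩ := hB₀MR
  have hB₀ne : B₀.Nonempty := (hpart.1 B₀ hB₀π).1
  set mn := B₀.min' hB₀ne with hmn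
  set mx := B₀.max' hB₀ne with hmx
  -- find an element u ≤ v in B₀ with different rN
  have hx : ∃ x : Fin m, idx x ≠ idx mn ∧ mn < x ∧ x < mx := by
    obtain ⟨u, hu, v, hv, huv⟩ := hB₀mr
    have key : ∀ u v : Fin m, u ∈ B₀ → v ∈ B₀ → u ≤ v → rN idx u ≠ rN idx v →
        ∃ x : Fin m, idx x ≠ idx mn ∧ mn < x ∧ x < mx := by
      intro u v hu hv hle hne
      have hxex : ∃ x, u ≤ x ∧ x ≤ v ∧ idx x ≠ idx u := by
        by_contra hcon
        push_neg at hcon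
        exact hne (rN_eq_of_idx_const idx hle fun w h1 h2 => hcon w h1 h2)
      obtain ⟨x, hx1, hx2, hx3⟩ := hxex
      have hiu : idx u = idx mn := hmono B₀ hB₀π u hu mn (B₀.min'_mem hB₀ne)
      have hiv : idx v = idx mn := hmono B₀ hB₀π v hv mn (B₀.min'_mem hB₀ne)
      have himx : idx mx = idx mn := hmono B₀ hB₀π mx (B₀.max'_mem hB₀ne) mn (B₀.min'_mem hB₀ne)
      refine ⟨x, by rw [← hiu]; exact hx3, ?_, ?_⟩
      · have h1 : mn ≤ x := le_trans (B₀.min'_le u hu) hx1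
        rcases lt_or_eq_of_le h1 with h | h
        · exact h
        · exfalso; apply hx3; rw [← h, hiu]
      · have h1 : x ≤ mx := le_trans hx2 (B₀.le_max' v hv)
        rcases lt_or_eq_of_le h1 with h | h
        · exact h
        · exfalso; apply hx3; rw [h, himx, hiu]
    rcases le_total u v with hle | hle
    · exact key u v hu hv hle huv
    · exact key v u hv hu hle (Ne.symm huv)
  obtain ⟨x, hxid, hxmn, hxmx⟩ := hx
  refine ⟨x, ?_⟩
  intro D hD hDmr w hw hweq
  -- basic facts
  have hDne : D.Nonempty := (hpart.1 D hD).1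
  have hidwx : idx w = idx x := idx_eq_of_rN_eq idx hweq
  have hDneB₀ : D ≠ B₀ := by
    intro h
    apply hxid
    rw [← hidwx]
    exact hmono B₀ hB₀π w (h ▸ hw) mn (B₀.min'_mem hB₀ne)
  -- the fiber of x is strictly inside (mn, mx)
  have hfib : ∀ y : Fin m, rN idx y = rN idx x → mn < y ∧ y < mx := by
    intro y hy
    constructor
    · rcases le_or_gt y mn with h | h
      · exfalso
        have h1 : y ≤ x := le_trans h (le_of_lt hxmn)
        have e1 : rN idx y ≤ rN idx mn := rN_mono idx h
        have e2 : rN idx mn ≤ rN idx x := rN_mono idx (le_of_lt hxmn)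
        have : rN idx mn = rN idx x := by omega
        exact hxid (idx_eq_of_rN_eq idx this.symm)
      · exact h
    · rcases le_or_gt mx y with h | h
      · exfalso
        have e1 : rN idx x ≤ rN idx mx := rN_mono idx (le_of_lt hxmx)
        have e2 : rN idx mx ≤ rN idx y := rN_mono idx h
        have : rN idx mx = rN idx x := by omega
        apply hxid
        have := idx_eq_of_rN_eq idx this
        rw [← this]
        exact hmono B₀ hB₀π mx (B₀.max'_mem hB₀ne) mn (B₀.min'_mem hB₀ne)
      · exact h
  obtain ⟨hwmn, hwmx⟩ := hfib w hweq
  set mnD := D.min' hDne with hmnD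
  set mxD := D.max' hDne with hmxD
  have hmnDne : mnD ≠ mn := by
    intro h
    have hmem : mnD ∈ B₀ := by rw [h]; exact B₀.min'_mem hB₀ne
    exact hDneB₀ (block_eq_of_mem hpart hD hB₀π (D.min'_mem hDne) hmem)
  have hmxDne : mxD ≠ mx := by
    intro h
    have hmem : mxD ∈ B₀ := by rw [h]; exact B₀.max'_mem hB₀ne
    exact hDneB₀ (block_eq_of_mem hpart hD hB₀π (D.max'_mem hDne) hmem)
  rcases le_or_gt mnD mn with hc1 | hc1
  · -- mnD < mn : crossing  mnD < mn < w < mx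
    have hlt : mnD < mn := lt_of_le_of_ne hc1 hmnDne
    exact hnc ⟨mnD, mn, w, mx, hlt, hwmn, hwmx, D, hD, B₀, hB₀π, hDneB₀,
      D.min'_mem hDne, hw, B₀.min'_mem hB₀ne, B₀.max'_mem hB₀ne⟩
  · rcases le_or_gt mx mxD with hc2 | hc2
    · -- mx < mxD : crossing mn < w < mx < mxD
      have hlt : mx < mxD := lt_of_le_of_ne hc2 (Ne.symm hmxDne)
      exact hnc ⟨mn, w, mx, mxD, hwmn, hwmx, hlt, B₀, hB₀π, D, hD, Ne.symm hDneB₀,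
        B₀.min'_mem hB₀ne, B₀.max'_mem hB₀ne, hw, D.max'_mem hDne⟩
    · -- strictly inside: contradicts minimality
      have hDMR : D ∈ MR := mem_filter.2 ⟨hD, hDmr⟩
      have hle := hB₀min D hDMR
      rw [spanF_eq hB₀ne, spanF_eq hDne] at hle
      have h1 : mxD.val < mx.val := hc2
      have h2 : mn.val < mnD.val := hc1
      have h3 : mnD.val < m := mnD.2
      omega

lemma sign_sum {p : ℕ} (T : Finset (Fin p)) (hT : T ≠ univ) :
    ∑ s ∈ univ.filter (fun s : Finset (Fin p) => T ⊆ s ∧ s ≠ univ),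
      (-1 : ℂ) ^ (p - s.card) = -1 := by
  have key : ∑ s ∈ univ.filter (fun s : Finset (Fin p) => T ⊆ s),
      (-1 : ℂ) ^ (p - s.card) = 0 := by
    rw [Finset.sum_nbij' (i := fun s => s \ T) (j := fun u => u ∪ T)
      (t := Tᶜ.powerset) (g := fun u => (-1 : ℂ) ^ (p - (u ∪ T).card))]
    · -- now sum over powerset of Tᶜ
      have hcc : Tᶜ.card ≠ 0 := by
        rw [Finset.card_ne_zero, nonempty_iff_ne_empty]
        intro h
        exact hT (by rwa [compl_eq_empty_iff] at h)
      have heq : ∀ u ∈ Tᶜ.powerset, (-1 : ℂ) ^ (p - (u ∪ T).card)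
          = (-1 : ℂ) ^ (Tᶜ.card - u.card) := by
        intro u hu
        rw [mem_powerset] at hu
        have hdisj : Disjoint u T := by
          rw [Finset.disjoint_right]
          intro x hxT hxu
          exact (Finset.mem_compl.1 (hu hxu)) hxT
        rw [card_union_of_disjoint hdisj]
        congr 1
        have h1 : T.card + Tᶜ.card = p := by
          rw [Finset.card_add_card_compl]
          simp
        have h2 : u.card ≤ Tᶜ.card := card_le_card hu
        omega
      rw [Finset.sum_congr rfl heq]
      -- now ∑_{u ⊆ Tᶜ} (-1)^(c - |u|) = 0
      have hfac : ∀ u ∈ Tᶜ.powerset, (-1 : ℂ) ^ (Tᶜ.card - u.card)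
          = (-1 : ℂ) ^ Tᶜ.card * (-1 : ℂ) ^ u.card := by
        intro u hu
        rw [mem_powerset] at hu
        have h2 : u.card ≤ Tᶜ.card := card_le_card hu
        have : (-1 : ℂ) ^ (Tᶜ.card - u.card) * (-1 : ℂ) ^ u.card * (-1 : ℂ) ^ u.card
            = (-1 : ℂ) ^ Tᶜ.card * (-1 : ℂ) ^ u.card := by
          rw [← pow_add, Nat.sub_add_cancel h2]
        have hsq : (-1 : ℂ) ^ u.card * (-1 : ℂ) ^ u.card = 1 := by
          rw [← pow_add, Even.neg_one_pow ⟨u.card, by omega⟩]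
        calc (-1 : ℂ) ^ (Tᶜ.card - u.card)
            = (-1 : ℂ) ^ (Tᶜ.card - u.card) * ((-1 : ℂ) ^ u.card * (-1 : ℂ) ^ u.card) := by
              rw [hsq, mul_one]
          _ = (-1 : ℂ) ^ Tᶜ.card * (-1 : ℂ) ^ u.card := by rw [← mul_assoc, this]
      rw [Finset.sum_congr rfl hfac, ← Finset.mul_sum]
      have : ∑ u ∈ Tᶜ.powerset, (-1 : ℂ) ^ u.card = 0 := by
        have hzer := Finset.sum_powerset_neg_one_pow_card (x := Tᶜ)
        have hne2 : Tᶜ ≠ ∅ := by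
          intro h
          rw [h] at hcc
          simp at hcc
        rw [if_neg hne2] at hzer
        exact_mod_cast congrArg (fun z : ℤ => (z : ℂ)) hzer
      rw [this, mul_zero]
    · intro s hs
      rw [mem_filter] at hs
      rw [mem_powerset]
      intro x hx
      rw [Finset.mem_compl]
      exact (Finset.mem_sdiff.1 hx).2
    · intro u hu
      rw [mem_filter]
      exact ⟨mem_univ _, Finset.subset_union_right⟩
    · intro s hs
      rw [mem_filter] at hs
      rw [Finset.sdiff_union_of_subset hs.2]
    · intro u hu
      rw [mem_powerset] at hu
      rw [Finset.union_sdiff_right]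
      exact Finset.sdiff_eq_self_of_disjoint (Finset.disjoint_left.2
        fun x hxu hxT => (Finset.mem_compl.1 (hu hxu)) hxT)
    · intro s hs
      rw [mem_filter] at hs
      rw [Finset.sdiff_union_of_subset hs.2]
  have hsplit : univ.filter (fun s : Finset (Fin p) => T ⊆ s)
      = insert univ (univ.filter (fun s : Finset (Fin p) => T ⊆ s ∧ s ≠ univ)) := by
    ext s
    simp only [mem_filter, mem_univ, true_and, Finset.mem_insert]
    constructor
    · intro h
      by_cases hs : s = univ
      · exact Or.inl hs
      · exact Or.inr ⟨h, hs⟩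
    · rintro (rfl | ⟨h, _⟩)
      · exact subset_univ T
      · exact h
  rw [hsplit, Finset.sum_insert (by simp)] at key
  simp only [Finset.card_univ, Fintype.card_fin, Nat.sub_self, pow_zero] at key
  linear_combination key


end Chunk7

section Chunk8
variable {A : Type*} [Ring A] [Algebra ℂ A] {m p : ℕ} {ι : Type*}
lemma sortProd_univ (a : Fin m → A) : sortProd univ a = (List.ofFn a).prod := by
  unfold sortProd
  rw [Fin.sort_univ, List.ofFn_eq_map]

lemma sortProd_empty (a : Fin m → A) : sortProd ∅ a = 1 := by
  unfold sortProd
  simp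

lemma sortProd_mem {S : Subalgebra ℂ A} {U : Finset (Fin m)} {a : Fin m → A}
    (h : ∀ j ∈ U, a j ∈ S) : sortProd U a ∈ S := by
  apply Subalgebra.list_prod_mem
  intro x hx
  obtain ⟨j, hj, rfl⟩ := List.mem_map.1 hx
  exact h j ((Finset.mem_sort _).1 hj)

lemma sortProd_fiberwise {f : Fin m → Fin p} (hf : ∀ j j', j ≤ j' → f j ≤ f j')
    (S : Finset (Fin p)) (a : Fin m → A) :
    ((S.sort (· ≤ ·)).map (fun t => sortProd (univ.filter fun j => f j = t) a)).prod
      = sortProd (univ.filter fun j => f j ∈ S) a := by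
  induction S using Finset.induction_on_min with
  | empty =>
    have h1 : (univ.filter fun j : Fin m => f j ∈ (∅ : Finset (Fin p))) = ∅ := by
      ext j; simp
    rw [h1, sortProd_empty]
    simp
  | insert t₀ S hmin ih =>
    have hins : insert t₀ S = {t₀} ∪ S := by
      ext x; simp
    have hsort : (insert t₀ S).sort (· ≤ ·) = t₀ :: S.sort (· ≤ ·) := by
      rw [hins, sort_union_of_lt (by
        intro v hv w hw
        rw [Finset.mem_singleton] at hv
        exact hv ▸ hmin w hw)]
      simp
    rw [hsort, List.map_cons, List.prod_cons, ih]
    have hsplit : (univ.filter fun j : Fin m => f j ∈ insert t₀ S)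
        = (univ.filter fun j => f j = t₀) ∪ (univ.filter fun j => f j ∈ S) := by
      ext j
      simp only [mem_filter, mem_univ, true_and, Finset.mem_union, Finset.mem_insert]
    rw [hsplit, sortProd_union_of_lt]
    intro v hv w hw
    rw [mem_filter] at hv hw
    by_contra hc
    push_neg at hc
    have hle := hf w v hc
    rw [hv.2] at hle
    exact absurd hle (not_le.2 (hmin _ hw.2))

lemma prodFn_mask {f : Fin m → Fin p} (hf : ∀ j j', j ≤ j' → f j ≤ f j')
    (S : Finset (Fin p)) (a : Fin m → A) :
    (List.ofFn (fun t => if t ∈ S then sortProd (univ.filter fun j => f j = t) a else 1)).prod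
      = sortProd (univ.filter fun j => f j ∈ S) a := by
  rw [List.ofFn_eq_map,
    mask_prod (List.finRange p) (· ∈ S) (fun t => sortProd (univ.filter fun j => f j = t) a),
    ← Fin.sort_univ, sort_filter_mem univ (· ∈ S), Finset.filter_univ_mem,
    sortProd_fiberwise hf]


end Chunk8

lemma NCP_congr {m : ℕ} {U : Finset (Fin m)} {χ χ' : Finset (Fin m) → Prop}
    (h : ∀ π, PartOn U π → IsNoncrossing π → ((∀ B ∈ π, χ B) ↔ (∀ B ∈ π, χ' B))) :
    NCP U χ = NCP U χ' := by
  ext π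
  rw [mem_NCP, mem_NCP]
  constructor
  · rintro ⟨h1, h2, h3⟩
    exact ⟨h1, h2, (h π h1 h2).1 h3⟩
  · rintro ⟨h1, h2, h3⟩
    exact ⟨h1, h2, (h π h1 h2).2 h3⟩



theorem main_thm {A : Type*} [Ring A] [Algebra ℂ A] {ι : Type*}
    (τ : A →ₗ[ℂ] ℂ) (hτ1 : τ 1 = 1)
    (R : ∀ m : ℕ, MultilinearMap ℂ (fun _ : Fin m => A) ℂ)
    (hR : MomentCumulant τ R)
    (Alg : ι → Subalgebra ℂ A) (hfree : IsFreeFamily τ Alg) :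
    ∀ m : ℕ, ∀ idx : Fin m → ι, ∀ a : Fin m → A, (∀ j, a j ∈ Alg (idx j)) →
      τ (List.ofFn a).prod
        = ∑ π ∈ (NC m).filter (fun π => ∀ B ∈ π, ∀ j ∈ B, ∀ k ∈ B, idx j = idx k),
            cumulantTerm R π a := by
  intro m
  induction m using Nat.strong_induction_on with
  | _ m IH =>
  intro idx a ha
  rcases Nat.eq_zero_or_pos m with hm0 | hm
  · subst hm0
    rw [NC_eq_NCP (fun B => ∀ j ∈ B, ∀ k ∈ B, idx j = idx k),
      show (univ : Finset (Fin 0)) = ∅ from rfl, NCP_empty, Finset.sum_singleton]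
    have h0 : (List.ofFn a) = [] := by simp
    rw [h0]
    simpa [cumulantTerm] using hτ1
  by_cases hconst : ∀ j k : Fin m, idx j = idx k
  · rw [Finset.filter_true_of_mem (fun π _ => fun B _ j _ k _ => hconst j k)]
    exact hR m hm a
  rw [NC_eq_NCP (fun B => ∀ j ∈ B, ∀ k ∈ B, idx j = idx k)]
  set p := pcount idx hm with hp
  set f : Fin m → Fin p := rHat idx hm with hf
  have hfmono : ∀ j j' : Fin m, j ≤ j' → f j ≤ f j' := fun j j' h => rN_mono idx h
  set φm : Finset (Fin m) → Prop := fun B => ∀ j ∈ B, ∀ k ∈ B, idx j = idx k with hφm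
  set φf : Finset (Fin m) → Prop := fun B => ∃ t : Fin p, B ⊆ fib idx hm t with hφf
  set b : Fin p → A := fun t => sortProd (univ.filter fun j => f j = t) a with hb
  set μ : Fin p → ℂ := fun t => τ (b t) with hμdef
  have hp2 : 1 < p := by
    rcases Nat.lt_or_ge 1 p with h | h
    · exact h
    exfalso
    apply hconst
    have hrl : rN idx (lastF hm) = 0 := by
      have h2 : p = rN idx (lastF hm) + 1 := rfl
      omega
    have hz : rN idx ⟨0, hm⟩ = 0 := by
      unfold rN
      simp
    have hkey := idx_const_of_rN_eq idx (j := ⟨0, hm⟩) (j' := lastF hm)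
      (by show (0:ℕ) ≤ _; omega) (by rw [hz, hrl])
    intro j k
    rw [hkey j (by show (0:ℕ) ≤ j.1; omega) (by show j.1 ≤ m - 1; have := j.2; omega),
        hkey k (by show (0:ℕ) ≤ k.1; omega) (by show k.1 ≤ m - 1; have := k.2; omega)]
  have hfib_ne : ∀ t : Fin p, ∃ x : Fin m, f x ≠ t := by
    intro t
    have h2 : ∃ t' : Fin p, t' ≠ t := by
      rcases Nat.eq_zero_or_pos t.1 with h | h
      · refine ⟨⟨1, hp2⟩, fun hc => ?_⟩
        have hcv : (1:ℕ) = ↑t := congrArg Fin.val hc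
        omega
      · refine ⟨⟨0, by omega⟩, fun hc => ?_⟩
        have hcv : (0:ℕ) = ↑t := congrArg Fin.val hc
        omega
    obtain ⟨t', ht'⟩ := h2
    obtain ⟨x, hx⟩ := fib_nonempty idx hm t'
    refine ⟨x, ?_⟩
    have hxe : f x = t' := (Finset.mem_filter.1 hx).2
    rw [hxe]; exact ht'
  have hUcard : ∀ U : Finset (Fin m), U ≠ univ → U.card < m := by
    intro U hU
    have := Finset.card_lt_card (Finset.ssubset_univ_iff.2 hU)
    simpa using this
  have hmom : ∀ U : Finset (Fin m), U.card < m →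
      τ (sortProd U a) = ∑ π ∈ NCP U φm, cumulantTerm R π a := by
    intro U hU
    have he : StrictMono (fun i => (U.orderEmbOfFin rfl i : Fin m)) :=
      (U.orderEmbOfFin rfl).strictMono
    have hrange : univ.image (fun i => (U.orderEmbOfFin rfl i : Fin m)) = U := by
      ext x
      simp only [Finset.mem_image, Finset.mem_univ, true_and]
      constructor
      · rintro ⟨i, rfl⟩
        exact Finset.orderEmbOfFin_mem _ _ _
      · intro hx
        have hx2 : x ∈ Set.range (U.orderEmbOfFin rfl) := by
          rw [Finset.range_orderEmbOfFin]
          exact hx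
        obtain ⟨i, hi⟩ := hx2
        exact ⟨i, hi⟩
    have h1 : sortProd U a = (List.ofFn fun i => a ((U.orderIsoOfFin rfl i : Fin m))).prod :=
      (ofFn_orderIso_prod U a).symm
    rw [h1]
    have h2 := IH U.card hU (fun i => idx (U.orderEmbOfFin rfl i))
      (fun i => a (U.orderEmbOfFin rfl i)) (fun i => ha _)
    rw [show (List.ofFn fun i => a ((U.orderIsoOfFin rfl i : Fin m)))
      = List.ofFn (fun i => a (U.orderEmbOfFin rfl i)) from rfl, h2,
      NC_eq_NCP (fun B => ∀ j ∈ B, ∀ k ∈ B,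
          idx (U.orderEmbOfFin rfl j) = idx (U.orderEmbOfFin rfl k))]
    refine transport R he hrange a φm _ ?_
    intro bset
    constructor
    · intro h j hj k hk
      obtain ⟨j0, hj0, rfl⟩ := Finset.mem_image.1 hj
      obtain ⟨k0, hk0, rfl⟩ := Finset.mem_image.1 hk
      exact h j0 hj0 k0 hk0
    · intro h j0 hj0 k0 hk0
      exact h _ (Finset.mem_image_of_mem _ hj0) _ (Finset.mem_image_of_mem _ hk0)
  set M := τ.compMultilinearMap (MultilinearMap.mkPiAlgebraFin ℂ p A) with hM
  have hMv : ∀ v : Fin p → A, M v = τ (List.ofFn v).prod := by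
    intro v
    rw [hM]
    simp [MultilinearMap.mkPiAlgebraFin_apply]
  have hbmem : ∀ t, b t ∈ Alg (colF idx hm t) := by
    intro t
    apply sortProd_mem
    intro j hj
    have hjt : f j = t := (Finset.mem_filter.1 hj).2
    have hcs := col_spec idx hm j
    rw [← hjt, ← hcs]
    exact ha j
  set β : Fin p → A := fun t => b t - algebraMap ℂ A (μ t) with hβ
  have hβmem : ∀ t, β t ∈ Alg (colF idx hm t) := fun t =>
    sub_mem (hbmem t) (Subalgebra.algebraMap_mem _ _)
  have hβτ : ∀ t, τ (β t) = 0 := by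
    intro t
    show τ (b t - algebraMap ℂ A (μ t)) = 0
    rw [map_sub, Algebra.algebraMap_eq_smul_one, map_smul, hτ1, smul_eq_mul, mul_one, sub_self]
  have hadj : ∀ j : Fin (rN idx (lastF hm)),
      colF idx hm j.castSucc ≠ colF idx hm j.succ := by
    intro j
    have h := col_adj idx hm j.1 (by
      show j.1 + 1 < pcount idx hm
      have h2 : pcount idx hm = rN idx (lastF hm) + 1 := rfl
      have := j.2
      omega)
    convert h using 2 <;> rfl
  have hfree0 : τ (List.ofFn β).prod = 0 :=
    hfree (rN idx (lastF hm)) (colF idx hm) β hβmem hadj hβτ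
  have hexp : (0:ℂ) = ∑ s : Finset (Fin p),
      (∏ t ∈ sᶜ, (-μ t)) * τ (sortProd (univ.filter fun j => f j ∈ s) a) := by
    have h1 : M β = 0 := by rw [hMv]; exact hfree0
    have h2 : β = b + (fun t => algebraMap ℂ A (-μ t)) := by
      funext t
      show b t - algebraMap ℂ A (μ t) = b t + algebraMap ℂ A (-μ t)
      rw [map_neg, sub_eq_add_neg]
    rw [h2, M.map_add_univ] at h1
    rw [← h1]
    apply Finset.sum_congr rfl
    intro s _
    have h3 : s.piecewise b (fun t => algebraMap ℂ A (-μ t))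
        = fun t => (if t ∈ s then (1:ℂ) else -μ t) • (if t ∈ s then b t else 1) := by
      funext t
      by_cases ht : t ∈ s
      · simp [Finset.piecewise, ht]
      · simp [Finset.piecewise, ht, Algebra.algebraMap_eq_smul_one]
    rw [h3, M.map_smul_univ, smul_eq_mul]
    congr 1
    · rw [← Finset.prod_filter_mul_prod_filter_not univ (· ∈ s)]
      have e1 : ∏ t ∈ univ.filter (· ∈ s), (if t ∈ s then (1:ℂ) else -μ t) = 1 := by
        rw [Finset.prod_congr rfl (fun t ht => if_pos (Finset.mem_filter.1 ht).2)]
        exact Finset.prod_const_one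
      have e2 : univ.filter (fun t : Fin p => ¬ t ∈ s) = sᶜ := by
        ext t; simp
      rw [e1, one_mul, e2]
      exact Finset.prod_congr rfl (fun t ht => if_neg (Finset.mem_compl.1 ht))
    · rw [hMv]
      exact congrArg τ (prodFn_mask hfmono s a)
  have hμfib : ∀ t : Fin p, μ t = ∑ ρ ∈ NCP (univ.filter fun j => f j = t) φf,
      cumulantTerm R ρ a := by
    intro t
    have hne : (univ.filter fun j : Fin m => f j = t) ≠ univ := by
      obtain ⟨x, hx⟩ := hfib_ne t
      intro hc
      have hxm : x ∈ univ.filter fun j : Fin m => f j = t := by rw [hc]; exact mem_univ x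
      exact hx (Finset.mem_filter.1 hxm).2
    have h1 : μ t = τ (sortProd (univ.filter fun j => f j = t) a) := rfl
    rw [h1, hmom _ (hUcard _ hne)]
    congr 1
    apply NCP_congr
    intro π hpart hnc
    constructor
    · intro _ B hB
      exact ⟨t, fun y hy => (hpart.1 B hB).2 hy⟩
    · intro _ B hB j hj k hk
      have hj' := (hpart.1 B hB).2 hj
      have hk' := (hpart.1 B hB).2 hk
      apply idx_eq_of_rN_eq
      have e1 : f j = t := (Finset.mem_filter.1 hj').2
      have e2 : f k = t := (Finset.mem_filter.1 hk').2
      exact congrArg Fin.val (e1.trans e2.symm)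
  have hFP : ∀ w : Finset (Fin p), ∏ t ∈ w, μ t
      = ∑ ρ ∈ NCP (univ.filter fun j => f j ∈ w) φf, cumulantTerm R ρ a := by
    intro w
    induction w using Finset.induction_on with
    | empty =>
      have h1 : (univ.filter fun j : Fin m => f j ∈ (∅ : Finset (Fin p))) = ∅ := by
        ext j; simp
      rw [h1, NCP_empty, Finset.prod_empty, Finset.sum_singleton]
      simp [cumulantTerm]
    | @insert t w htw ih =>
      rw [Finset.prod_insert htw, ih, hμfib t,
        split_prod R a ?hdisj φf φf ?hsep]
      · have hsets : (univ.filter fun j => f j = t) ∪ (univ.filter fun j => f j ∈ w)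
            = univ.filter fun j : Fin m => f j ∈ insert t w := by
          ext j
          simp only [Finset.mem_union, Finset.mem_filter, Finset.mem_univ, true_and,
            Finset.mem_insert]
        rw [hsets]
        congr 1
        apply NCP_congr
        intro π hpart hnc
        constructor
        · rintro h B hB
          rcases h B hB with ⟨_, hf2⟩ | ⟨_, hf2⟩ <;> exact hf2
        · intro h B hB
          obtain ⟨t', ht'⟩ := h B hB
          obtain ⟨x, hx⟩ := (hpart.1 B hB).1
          have hxU := (hpart.1 B hB).2 hx
          have hxt' : f x = t' := (Finset.mem_filter.1 (ht' hx)).2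
          have hxi : f x ∈ insert t w := (Finset.mem_filter.1 hxU).2
          rw [hxt'] at hxi
          rcases Finset.mem_insert.1 hxi with h1 | h1
          · left
            refine ⟨?_, ⟨t', ht'⟩⟩
            intro y hy
            rw [Finset.mem_filter]
            have hyt : f y = t' := (Finset.mem_filter.1 (ht' hy)).2
            exact ⟨mem_univ y, by rw [hyt, h1]⟩
          · right
            refine ⟨?_, ⟨t', ht'⟩⟩
            intro y hy
            rw [Finset.mem_filter]
            have hyt : f y = t' := (Finset.mem_filter.1 (ht' hy)).2
            exact ⟨mem_univ y, by rw [hyt]; exact h1⟩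
      case hdisj =>
        rw [Finset.disjoint_left]
        intro x hx hx'
        have e1 : f x = t := (Finset.mem_filter.1 hx).2
        have e2 : f x ∈ w := (Finset.mem_filter.1 hx').2
        rw [e1] at e2; exact htw e2
      case hsep =>
        intro B B' hBV hB'W hBne hB'ne hφB hψB' i j k l h1 h2 h3
        obtain ⟨t2, ht2⟩ := hψB'
        obtain ⟨x', hx'⟩ := hB'ne
        have hx'w : f x' ∈ w := (Finset.mem_filter.1 (hB'W hx')).2
        have hx't2 : f x' = t2 := (Finset.mem_filter.1 (ht2 hx')).2
        have ht2w : t2 ∈ w := by rw [← hx't2]; exact hx'w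
        have ht2t : t2 ≠ t := fun hc => htw (hc ▸ ht2w)
        constructor
        · rintro ⟨hi, hk, hj, hl⟩
          have hjf : j ∈ fib idx hm t :=
            fib_convex idx hm (hBV hi) (hBV hk) (le_of_lt h1) (le_of_lt h2)
          have e1 : f j = t := (Finset.mem_filter.1 hjf).2
          have e2 : f j = t2 := (Finset.mem_filter.1 (ht2 hj)).2
          exact ht2t (e2.symm.trans e1)
        · rintro ⟨hi, hk, hj, hl⟩
          have hjf : j ∈ fib idx hm t2 :=
            fib_convex idx hm (ht2 hi) (ht2 hk) (le_of_lt h1) (le_of_lt h2)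
          have e1 : f j = t2 := (Finset.mem_filter.1 hjf).2
          have e2 : f j = t := (Finset.mem_filter.1 (hBV hj)).2
          exact ht2t (e1.symm.trans e2)
  set Tset : Finset (Finset (Fin m)) → Finset (Fin p) := fun π =>
    univ.filter (fun t : Fin p => ∃ B ∈ π, (∃ u ∈ B, ∃ v ∈ B, rN idx u ≠ rN idx v)
      ∧ ∃ j ∈ B, f j = t) with hTset
  have hTne : ∀ π ∈ NCP (univ : Finset (Fin m)) φm, Tset π ≠ univ := by
    intro π hπ
    rw [mem_NCP] at hπ
    obtain ⟨hpart, hnc, hmono'⟩ := hπ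
    obtain ⟨x, hx⟩ := exists_untouched idx hm hpart hnc hmono'
    intro hc
    have hmem : f x ∈ Tset π := by rw [hc]; exact mem_univ _
    obtain ⟨B, hB, hmr, j, hj, hfj⟩ := (Finset.mem_filter.1 hmem).2
    exact hx B hB hmr j hj (congrArg Fin.val hfj)
  have hGs : ∀ s : Finset (Fin p),
      NCP (univ : Finset (Fin m)) (fun B => (B ⊆ univ.filter (fun j => f j ∈ s) ∧ φm B)
        ∨ (B ⊆ univ.filter (fun j => f j ∈ sᶜ) ∧ φf B))
      = (NCP univ φm).filter (fun π => Tset π ⊆ s) := by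
    intro s
    ext π
    rw [Finset.mem_filter, mem_NCP, mem_NCP]
    constructor
    · rintro ⟨hpart, hnc, hχ⟩
      refine ⟨⟨hpart, hnc, ?_⟩, ?_⟩
      · intro B hB
        rcases hχ B hB with ⟨_, h2⟩ | ⟨_, h2⟩
        · exact h2
        · obtain ⟨t', ht'⟩ := h2
          intro j hj k hk
          apply idx_eq_of_rN_eq
          have e1 : f j = t' := (Finset.mem_filter.1 (ht' hj)).2
          have e2 : f k = t' := (Finset.mem_filter.1 (ht' hk)).2
          exact congrArg Fin.val (e1.trans e2.symm)
      · intro t ht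
        obtain ⟨B, hB, hmr, j, hj, hfj⟩ := (Finset.mem_filter.1 ht).2
        rcases hχ B hB with ⟨h1, _⟩ | ⟨h1, h2⟩
        · have hjs := (Finset.mem_filter.1 (h1 hj)).2
          rw [hfj] at hjs; exact hjs
        · exfalso
          obtain ⟨t', ht'⟩ := h2
          obtain ⟨u, hu, v, hv, huv⟩ := hmr
          have e1 : f u = t' := (Finset.mem_filter.1 (ht' hu)).2
          have e2 : f v = t' := (Finset.mem_filter.1 (ht' hv)).2
          exact huv (congrArg Fin.val (e1.trans e2.symm))
    · rintro ⟨⟨hpart, hnc, hmono'⟩, hTs⟩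
      refine ⟨hpart, hnc, ?_⟩
      intro B hB
      by_cases hfl : ∃ t', B ⊆ fib idx hm t'
      · obtain ⟨t', ht'⟩ := hfl
        by_cases hts : t' ∈ s
        · left
          refine ⟨?_, hmono' B hB⟩
          intro y hy
          have ey : f y = t' := (Finset.mem_filter.1 (ht' hy)).2
          rw [Finset.mem_filter]
          exact ⟨mem_univ y, by rw [ey]; exact hts⟩
        · right
          refine ⟨?_, ⟨t', ht'⟩⟩
          intro y hy
          have ey : f y = t' := (Finset.mem_filter.1 (ht' hy)).2
          rw [Finset.mem_filter]
          exact ⟨mem_univ y, by rw [ey]; exact Finset.mem_compl.2 hts⟩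
      · left
        refine ⟨?_, hmono' B hB⟩
        have hmr : ∃ u ∈ B, ∃ v ∈ B, rN idx u ≠ rN idx v := by
          by_contra hcon
          push_neg at hcon
          obtain ⟨x0, hx0⟩ := (hpart.1 B hB).1
          apply hfl
          refine ⟨f x0, ?_⟩
          intro y hy
          rw [show fib idx hm (f x0) = univ.filter (fun j => f j = f x0) from rfl,
            Finset.mem_filter]
          exact ⟨mem_univ y, Fin.ext (hcon y hy x0 hx0)⟩
        intro y hy
        rw [Finset.mem_filter]
        refine ⟨mem_univ y, ?_⟩
        apply hTs
        rw [hTset]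
        rw [Finset.mem_filter]
        exact ⟨mem_univ _, B, hB, hmr, y, hy, rfl⟩
  have hsplit := Finset.sum_erase_add (univ : Finset (Finset (Fin p)))
      (fun s => (∏ t ∈ sᶜ, (-μ t)) * τ (sortProd (univ.filter fun j => f j ∈ s) a))
      (Finset.mem_univ univ)
  have huniv : (∏ t ∈ (univ : Finset (Fin p))ᶜ, (-μ t))
      * τ (sortProd (univ.filter fun j : Fin m => f j ∈ (univ : Finset (Fin p))) a)
      = τ (List.ofFn a).prod := by
    rw [Finset.compl_univ, Finset.prod_empty, one_mul]
    have hU : (univ.filter (fun j : Fin m => f j ∈ (univ : Finset (Fin p)))) = univ := by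
      ext j; simp
    rw [hU, sortProd_univ]
  have hmain : τ (List.ofFn a).prod
      = - ∑ s ∈ (univ : Finset (Finset (Fin p))).erase univ,
          (∏ t ∈ sᶜ, (-μ t)) * τ (sortProd (univ.filter fun j => f j ∈ s) a) := by
    have h0 := hexp
    rw [← hsplit] at h0
    beta_reduce at h0
    rw [huniv] at h0
    linear_combination -h0
  have hstep : ∀ s ∈ (univ : Finset (Finset (Fin p))).erase univ,
      (∏ t ∈ sᶜ, (-μ t)) * τ (sortProd (univ.filter fun j => f j ∈ s) a)
      = ∑ π ∈ NCP (univ : Finset (Fin m)) φm,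
          (if Tset π ⊆ s then ((-1:ℂ)^(p - s.card)) * cumulantTerm R π a else 0) := by
    intro s hs
    have hsne : s ≠ univ := (Finset.mem_erase.1 hs).1
    have hsign : ∏ t ∈ sᶜ, (-μ t) = (-1:ℂ)^(p - s.card) * ∏ t ∈ sᶜ, μ t := by
      calc ∏ t ∈ sᶜ, (-μ t) = ∏ t ∈ sᶜ, ((-1:ℂ) * μ t) := by
            apply Finset.prod_congr rfl; intros; ring
        _ = (∏ _t ∈ sᶜ, (-1:ℂ)) * ∏ t ∈ sᶜ, μ t := Finset.prod_mul_distrib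
        _ = (-1:ℂ)^(sᶜ.card) * ∏ t ∈ sᶜ, μ t := by rw [Finset.prod_const]
        _ = _ := by rw [Finset.card_compl, Fintype.card_fin]
    have hUne : (univ.filter fun j : Fin m => f j ∈ s) ≠ univ := by
      obtain ⟨t₀, ht₀⟩ : ∃ t₀ : Fin p, t₀ ∉ s := by
        by_contra hcon
        push_neg at hcon
        exact hsne (Finset.eq_univ_iff_forall.2 hcon)
      obtain ⟨x, hx⟩ := fib_nonempty idx hm t₀
      intro hc
      have hxm : x ∈ univ.filter fun j : Fin m => f j ∈ s := by rw [hc]; exact mem_univ x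
      have e1 : f x = t₀ := (Finset.mem_filter.1 hx).2
      have e2 := (Finset.mem_filter.1 hxm).2
      rw [e1] at e2
      exact ht₀ e2
    have hsepC : ∀ B B', B ⊆ univ.filter (fun j : Fin m => f j ∈ s) →
        B' ⊆ univ.filter (fun j : Fin m => f j ∈ sᶜ) → B.Nonempty → B'.Nonempty →
        φm B → φf B' →
        ∀ i j k l : Fin m, i < j → j < k → k < l →
          ¬(i ∈ B ∧ k ∈ B ∧ j ∈ B' ∧ l ∈ B') ∧ ¬(i ∈ B' ∧ k ∈ B' ∧ j ∈ B ∧ l ∈ B) := by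
      intro B B' hBV hB'W hBne hB'ne hφB hψB' i j k l h1 h2 h3
      obtain ⟨t2, ht2⟩ := hψB'
      obtain ⟨x', hx'⟩ := hB'ne
      have hx'c : f x' ∈ sᶜ := (Finset.mem_filter.1 (hB'W hx')).2
      have hx't2 : f x' = t2 := (Finset.mem_filter.1 (ht2 hx')).2
      have ht2c : t2 ∈ sᶜ := by rw [← hx't2]; exact hx'c
      constructor
      · rintro ⟨hi, hk, hj, hl⟩
        have hkf : k ∈ fib idx hm t2 :=
          fib_convex idx hm (ht2 hj) (ht2 hl) (le_of_lt h2) (le_of_lt h3)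
        have e1 : f k = t2 := (Finset.mem_filter.1 hkf).2
        have e2 : f k ∈ s := (Finset.mem_filter.1 (hBV hk)).2
        rw [e1] at e2
        exact (Finset.mem_compl.1 ht2c) e2
      · rintro ⟨hi, hk, hj, hl⟩
        have hjf : j ∈ fib idx hm t2 :=
          fib_convex idx hm (ht2 hi) (ht2 hk) (le_of_lt h1) (le_of_lt h2)
        have e1 : f j = t2 := (Finset.mem_filter.1 hjf).2
        have e2 : f j ∈ s := (Finset.mem_filter.1 (hBV hj)).2
        rw [e1] at e2
        exact (Finset.mem_compl.1 ht2c) e2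
    have hdisjC : Disjoint (univ.filter (fun j : Fin m => f j ∈ s))
        (univ.filter (fun j : Fin m => f j ∈ sᶜ)) := by
      rw [Finset.disjoint_left]
      intro x hx hx'
      have e1 : f x ∈ s := (Finset.mem_filter.1 hx).2
      have e2 : f x ∈ sᶜ := (Finset.mem_filter.1 hx').2
      exact (Finset.mem_compl.1 e2) e1
    have hVW : (univ.filter (fun j : Fin m => f j ∈ s))
        ∪ (univ.filter (fun j : Fin m => f j ∈ sᶜ)) = univ := by
      ext j
      simp only [Finset.mem_union, Finset.mem_filter, Finset.mem_univ, true_and,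
        Finset.mem_compl, iff_true]
      tauto
    rw [hsign, hmom _ (hUcard _ hUne), hFP sᶜ, mul_assoc,
      mul_comm (∑ ρ ∈ NCP (univ.filter fun j : Fin m => f j ∈ sᶜ) φf, cumulantTerm R ρ a)
        (∑ π ∈ NCP (univ.filter fun j : Fin m => f j ∈ s) φm, cumulantTerm R π a),
      split_prod R a hdisjC φm φf hsepC, hVW, hGs s, Finset.sum_filter, Finset.mul_sum]
    apply Finset.sum_congr rfl
    intro π _
    rw [mul_ite, mul_zero]
  rw [Finset.sum_congr rfl hstep] at hmain
  rw [hmain, Finset.sum_comm]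
  have hinner : ∀ π ∈ NCP (univ : Finset (Fin m)) φm,
      ∑ s ∈ (univ : Finset (Finset (Fin p))).erase univ,
        (if Tset π ⊆ s then ((-1:ℂ)^(p - s.card)) * cumulantTerm R π a else 0)
      = - cumulantTerm R π a := by
    intro π hπ
    rw [← Finset.sum_filter]
    have hsetEq : ((univ : Finset (Finset (Fin p))).erase univ).filter (fun s => Tset π ⊆ s)
        = univ.filter (fun s : Finset (Fin p) => Tset π ⊆ s ∧ s ≠ univ) := by
      ext s
      simp only [Finset.mem_filter, Finset.mem_erase, Finset.mem_univ, true_and, and_true]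
      tauto
    rw [hsetEq, ← Finset.sum_mul, sign_sum _ (hTne π hπ), neg_one_mul]
  rw [Finset.sum_congr rfl hinner]
  simp


end NCAux

/-- For a free family of unital subalgebras, `τ(a₁ ⋯ a_n)` is the sum of the cumulant
terms `Π_{V ∈ π} R^{(|V|)}(a_V)` over only those noncrossing partitions `π` all of whose
blocks are monochromatic (the index map `j ↦ i_j` is constant on every block). -/
theorem tau_eq_sum_monochromatic {A : Type*} [Ring A] [Algebra ℂ A] {ι : Type*}
    (τ : A →ₗ[ℂ] ℂ) (hτ1 : τ 1 = 1)
    (R : ∀ m : ℕ, MultilinearMap ℂ (fun _ : Fin m => A) ℂ)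
    (hR : MomentCumulant τ R)
    (Alg : ι → Subalgebra ℂ A) (hfree : IsFreeFamily τ Alg)
    (n : ℕ) (hn : 0 < n) (idx : Fin n → ι) (a : Fin n → A)
    (ha : ∀ j, a j ∈ Alg (idx j)) :
    τ (List.ofFn a).prod =
      ∑ π ∈ (NC n).filter (fun π => ∀ B ∈ π, ∀ j ∈ B, ∀ k ∈ B, idx j = idx k),
        cumulantTerm R π a := by
  exact NCAux.main_thm τ hτ1 R hR Alg hfree n idx a ha
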